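/- Let C be a commutative k-algebra, A a C-algebra, B ⊆ A a C-subalgebra generated by {b_j}, τ a C-algebra automorphism of A, and δ a u-skew τ-derivation on A for a unit u ∈ C (δτ = uτδ). If τ(b_j) ∈ B and δ^n(b_j) ∈ (n)!_u · B for all j and n, then δ^n(B) ⊆ (n)!_u · B for all n. -/

import Mathlib

/-- The `q`-integer `(m)_q = q^(m-1) + ⋯ + q + 1`. -/
def qNat {k : Type*} [CommRing k] (q : k) (m : ℕ) : k := ∑ i ∈ Finset.range m, q ^ i

/-- The `q`-factorial `(m)!_q`. -/
def qFact {k : Type*} [CommRing k] (q : k) : ℕ → k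
  | 0 => 1
  | n + 1 => qNat q (n + 1) * qFact q n

/-- The `q`-binomial coefficients, defined by the `q`-Pascal rule. -/
def qChoose {k : Type*} [CommRing k] (q : k) : ℕ → ℕ → k
  | 0, 0 => 1
  | 0, _ + 1 => 0
  | _ + 1, 0 => 1
  | n + 1, i + 1 => qChoose q n (i + 1) + q ^ (n - i) * qChoose q n i

lemma qChoose_zero_right {k : Type*} [CommRing k] (q : k) (n : ℕ) : qChoose q n 0 = 1 := by
  cases n <;> rfl

lemma qChoose_eq_zero {k : Type*} [CommRing k] (q : k) :
    ∀ n i : ℕ, n < i → qChoose q n i = 0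
  | 0, i + 1, _ => rfl
  | n + 1, i + 1, h => by
      have h1 : n < i + 1 := by omega
      have h2 : n < i := by omega
      simp [qChoose, qChoose_eq_zero q n (i + 1) h1, qChoose_eq_zero q n i h2]

lemma qChoose_self {k : Type*} [CommRing k] (q : k) : ∀ n : ℕ, qChoose q n n = 1
  | 0 => rfl
  | n + 1 => by
      simp [qChoose, qChoose_eq_zero q n (n + 1) (Nat.lt_succ_self n), qChoose_self q n]

lemma qNat_add {k : Type*} [CommRing k] (q : k) (m l : ℕ) :
    qNat q (m + l) = qNat q m + q ^ m * qNat q l := by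
  simp only [qNat, Finset.sum_range_add, pow_add, Finset.mul_sum]

lemma qChoose_mul_qFact {k : Type*} [CommRing k] (q : k) :
    ∀ n i : ℕ, i ≤ n → qChoose q n i * (qFact q i * qFact q (n - i)) = qFact q n
  | 0, 0, _ => by simp [qChoose, qFact]
  | n + 1, 0, _ => by simp [qChoose_zero_right, qFact]
  | n + 1, i + 1, h => by
      rcases Nat.lt_or_ge i n with hin | hin
      · -- i + 1 ≤ n
        have key1 := qChoose_mul_qFact q n (i + 1) hin
        have key2 := qChoose_mul_qFact q n i (le_of_lt hin)
        have hsub1 : n - i = (n - (i + 1)) + 1 := by omega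
        have hq : qFact q (n - i) = qNat q (n - i) * qFact q (n - (i + 1)) := by
          rw [hsub1]; rfl
        have hnat : qNat q (n - i) + q ^ (n - i) * qNat q (i + 1) = qNat q (n + 1) := by
          rw [← qNat_add q (n - i) (i + 1)]
          congr 1
          omega
        have hsub2 : n + 1 - (i + 1) = n - i := by omega
        calc qChoose q (n + 1) (i + 1) * (qFact q (i + 1) * qFact q (n + 1 - (i + 1)))
            = (qChoose q n (i + 1) + q ^ (n - i) * qChoose q n i) *
                (qFact q (i + 1) * qFact q (n - i)) := by rw [hsub2]; rfl
          _ = (qChoose q n (i + 1) * (qFact q (i + 1) * qFact q (n - (i + 1)))) * qNat q (n - i)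
              + q ^ (n - i) * qNat q (i + 1) *
                (qChoose q n i * (qFact q i * qFact q (n - i))) := by
                rw [hq]; show _ = _; rw [show qFact q (i + 1) = qNat q (i + 1) * qFact q i from rfl]; ring
          _ = qFact q n * qNat q (n - i) + q ^ (n - i) * qNat q (i + 1) * qFact q n := by
                rw [key1, key2]
          _ = qNat q (n + 1) * qFact q n := by rw [← hnat]; ring
          _ = qFact q (n + 1) := rfl
      · -- i = n
        have hi : i = n := by omega
        subst hi
        simp [qChoose, qChoose_eq_zero q i (i + 1) (Nat.lt_succ_self i),
          qChoose_self q i, qFact]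

/-- Let `C` be a commutative `k`-algebra, `A` a `C`-algebra, `B ⊆ A` the
`C`-subalgebra generated by `{b_j}`, `τ` a `C`-algebra automorphism of `A`,
and `δ` a u-skew `τ`-derivation on `A` for a unit `u ∈ C` (`δτ = uτδ`).
If `τ(b_j) ∈ B` and `δ^n(b_j) ∈ (n)!_u B` for all `j, n`, then
`δ^n(B) ⊆ (n)!_u B` for all `n`. -/
theorem uskew_derivation_containment {k C A ι : Type*} [Field k] [CommRing C]
    [Algebra k C] [Ring A] [Algebra C A]
    (u : Cˣ) (τ : A ≃ₐ[C] A) (δ : A →ₗ[C] A)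
    (hder : ∀ a b : A, δ (a * b) = τ a * δ b + δ a * b)
    (hskew : ∀ a : A, δ (τ a) = (u : C) • τ (δ a))
    (b : ι → A)
    (hτb : ∀ j : ι, τ (b j) ∈ Algebra.adjoin C (Set.range b))
    (hδb : ∀ (n : ℕ) (j : ι), ∃ c ∈ Algebra.adjoin C (Set.range b),
        (⇑δ)^[n] (b j) = qFact (u : C) n • c) :
    ∀ (n : ℕ) (a : A), a ∈ Algebra.adjoin C (Set.range b) →
      ∃ c ∈ Algebra.adjoin C (Set.range b), (⇑δ)^[n] a = qFact (u : C) n • c := by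
  set B := Algebra.adjoin C (Set.range b) with hB
  -- τ preserves B
  have hτB : ∀ x ∈ B, τ x ∈ B := by
    intro x hx
    induction hx using Algebra.adjoin_induction with
    | mem x hx => obtain ⟨j, rfl⟩ := hx; exact hτb j
    | algebraMap r => rw [AlgEquiv.commutes]; exact Subalgebra.algebraMap_mem _ r
    | add x y _ _ hx hy => rw [map_add]; exact add_mem hx hy
    | mul x y _ _ hx hy => rw [map_mul]; exact mul_mem hx hy
  have hτiter : ∀ (m : ℕ) (x : A), x ∈ B → (⇑τ)^[m] x ∈ B := by
    intro m
    induction m with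
    | zero => intro x hx; exact hx
    | succ m ih => intro x hx; rw [Function.iterate_succ_apply']; exact hτB _ (ih x hx)
  -- iterates of τ are C-linear
  have hτsmul : ∀ (m : ℕ) (r : C) (x : A), (⇑τ)^[m] (r • x) = r • (⇑τ)^[m] x := by
    intro m
    induction m with
    | zero => intro r x; rfl
    | succ m ih =>
        intro r x
        rw [Function.iterate_succ_apply', Function.iterate_succ_apply', ih, map_smul]
  -- iterated skew-commutation
  have hskew_iter : ∀ (m : ℕ) (x : A), δ ((⇑τ)^[m] x) = ((u : C)) ^ m • (⇑τ)^[m] (δ x) := by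
    intro m
    induction m with
    | zero => intro x; simp
    | succ m ih =>
        intro x
        rw [Function.iterate_succ_apply', hskew, ih, map_smul,
          ← Function.iterate_succ_apply' τ m (δ x), smul_smul, ← pow_succ']
  -- the u-Leibniz rule
  have hLeib : ∀ (x y : A) (n : ℕ), (⇑δ)^[n] (x * y) =
      ∑ p ∈ Finset.HasAntidiagonal.antidiagonal n,
        qChoose (u : C) n p.1 • ((⇑τ)^[p.2] ((⇑δ)^[p.1] x) * (⇑δ)^[p.2] y) := by
    intro x y n
    induction n with
    | zero => simp [qChoose]
    | succ n ih =>
        rw [Function.iterate_succ_apply', ih, map_sum]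
        have hterm : ∀ p ∈ Finset.HasAntidiagonal.antidiagonal n,
            δ (qChoose (u : C) n p.1 • ((⇑τ)^[p.2] ((⇑δ)^[p.1] x) * (⇑δ)^[p.2] y)) =
              qChoose (u : C) n p.1 • ((⇑τ)^[p.2 + 1] ((⇑δ)^[p.1] x) * (⇑δ)^[p.2 + 1] y)
              + (qChoose (u : C) n p.1 * (u : C) ^ p.2) •
                  ((⇑τ)^[p.2] ((⇑δ)^[p.1 + 1] x) * (⇑δ)^[p.2] y) := by
          intro p _
          rw [map_smul, hder, hskew_iter, ← Function.iterate_succ_apply' δ p.1 x,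
            ← Function.iterate_succ_apply' τ p.2, ← Function.iterate_succ_apply' δ p.2,
            smul_mul_assoc, smul_add, smul_smul]
        rw [Finset.sum_congr rfl hterm, Finset.sum_add_distrib]
        -- name the generic summand
        set g : ℕ × ℕ → A :=
          fun p => qChoose (u : C) n p.1 • ((⇑τ)^[p.2] ((⇑δ)^[p.1] x) * (⇑δ)^[p.2] y) with hg
        have e1 : ∑ p ∈ Finset.HasAntidiagonal.antidiagonal (n + 1), g p =
            g (n + 1, 0) + ∑ p ∈ Finset.HasAntidiagonal.antidiagonal n, g (p.1, p.2 + 1) :=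
          Finset.Nat.sum_antidiagonal_succ'
        have e2 : ∑ p ∈ Finset.HasAntidiagonal.antidiagonal (n + 1), g p =
            g (0, n + 1) + ∑ p ∈ Finset.HasAntidiagonal.antidiagonal n, g (p.1 + 1, p.2) :=
          Finset.Nat.sum_antidiagonal_succ
        have hg0 : g (n + 1, 0) = 0 := by
          simp [hg, qChoose_eq_zero (u : C) n (n + 1) (Nat.lt_succ_self n)]
        have e3 : ∑ p ∈ Finset.HasAntidiagonal.antidiagonal n, g (p.1, p.2 + 1) =
            g (0, n + 1) + ∑ p ∈ Finset.HasAntidiagonal.antidiagonal n, g (p.1 + 1, p.2) := by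
          rw [← e2, e1, hg0, zero_add]
        rw [Finset.Nat.sum_antidiagonal_succ
          (f := fun p : ℕ × ℕ =>
            qChoose (u : C) (n + 1) p.1 • ((⇑τ)^[p.2] ((⇑δ)^[p.1] x) * (⇑δ)^[p.2] y))]
        have hsplit : ∀ p ∈ Finset.HasAntidiagonal.antidiagonal n,
            qChoose (u : C) (n + 1) (p.1 + 1) • ((⇑τ)^[p.2] ((⇑δ)^[p.1 + 1] x) * (⇑δ)^[p.2] y) =
              g (p.1 + 1, p.2)
              + (qChoose (u : C) n p.1 * (u : C) ^ p.2) •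
                  ((⇑τ)^[p.2] ((⇑δ)^[p.1 + 1] x) * (⇑δ)^[p.2] y) := by
          intro p hp
          have hpn : p.1 + p.2 = n := Finset.HasAntidiagonal.mem_antidiagonal.mp hp
          have hc : qChoose (u : C) (n + 1) (p.1 + 1) =
              qChoose (u : C) n (p.1 + 1) + (u : C) ^ p.2 * qChoose (u : C) n p.1 := by
            show qChoose (u : C) n (p.1 + 1) + (u : C) ^ (n - p.1) * qChoose (u : C) n p.1 = _
            rw [show n - p.1 = p.2 by omega]
          rw [hc, add_smul, hg]
          simp only []
          rw [mul_comm ((u : C) ^ p.2)]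
        rw [Finset.sum_congr rfl hsplit, Finset.sum_add_distrib]
        have hG1 : ∑ p ∈ Finset.HasAntidiagonal.antidiagonal n,
            qChoose (u : C) n p.1 • ((⇑τ)^[p.2 + 1] ((⇑δ)^[p.1] x) * (⇑δ)^[p.2 + 1] y) =
            ∑ p ∈ Finset.HasAntidiagonal.antidiagonal n, g (p.1, p.2 + 1) := rfl
        rw [hG1, e3]
        have hg01 : qChoose (u : C) (n + 1) 0 •
            ((⇑τ)^[n + 1] ((⇑δ)^[0] x) * (⇑δ)^[n + 1] y) = g (0, n + 1) := by
          simp [hg, qChoose_zero_right]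
        rw [hg01]
        abel
  -- δ kills 1 and scalars
  have hδ1 : δ (1 : A) = 0 := by
    have h := hder 1 1
    rw [mul_one, show τ (1 : A) = 1 from map_one τ, one_mul, mul_one] at h
    exact (left_eq_add.mp h)
  have hδalg : ∀ r : C, δ (algebraMap C A r) = 0 := by
    intro r
    rw [Algebra.algebraMap_eq_smul_one, map_smul, hδ1, smul_zero]
  -- main induction
  suffices H : ∀ a ∈ B, ∀ n : ℕ, ∃ c ∈ B, (⇑δ)^[n] a = qFact (u : C) n • c by
    intro n a ha; exact H a ha n
  intro a ha
  induction ha using Algebra.adjoin_induction with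
  | mem x hx =>
      obtain ⟨j, rfl⟩ := hx
      intro n; exact hδb n j
  | algebraMap r =>
      intro n
      cases n with
      | zero => exact ⟨algebraMap C A r, Subalgebra.algebraMap_mem _ r, by simp [qFact]⟩
      | succ n =>
          refine ⟨0, zero_mem _, ?_⟩
          rw [Function.iterate_succ_apply, hδalg, Function.iterate_fixed (map_zero δ) n,
            smul_zero]
  | add x y _ _ ihx ihy =>
      intro n
      obtain ⟨c1, hc1B, hc1⟩ := ihx n
      obtain ⟨c2, hc2B, hc2⟩ := ihy n
      refine ⟨c1 + c2, add_mem hc1B hc2B, ?_⟩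
      have : (⇑δ)^[n] (x + y) = (⇑δ)^[n] x + (⇑δ)^[n] y := by
        rw [← Module.End.pow_apply, ← Module.End.pow_apply, ← Module.End.pow_apply, map_add]
      rw [this, hc1, hc2, smul_add]
  | mul x y _ _ ihx ihy =>
      intro n
      choose f hfB hf using ihx
      choose g' hg'B hg' using ihy
      refine ⟨∑ p ∈ Finset.HasAntidiagonal.antidiagonal n, (⇑τ)^[p.2] (f p.1) * g' p.2, ?_, ?_⟩
      · exact Subalgebra.sum_mem _ fun p _ => mul_mem (hτiter p.2 _ (hfB p.1)) (hg'B p.2)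
      · rw [hLeib, Finset.smul_sum]
        refine Finset.sum_congr rfl fun p hp => ?_
        have hpn : p.1 + p.2 = n := Finset.HasAntidiagonal.mem_antidiagonal.mp hp
        rw [hf p.1, hg' p.2, hτsmul, smul_mul_assoc, mul_smul_comm, smul_smul, smul_smul]
        congr 1
        have key := qChoose_mul_qFact (u : C) n p.1 (by omega)
        rw [show n - p.1 = p.2 by omega] at key
        rw [← key]; ring
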